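/- For every language L over the push-pop alphabet Σ, zip(poppush(L)) = A* · zip(L), where A = { (pop v, push v) | v ∈ V } is viewed as a set of single letters of the zipped alphabet and · denotes language concatenation. -/

import Mathlib

/-- The push-pop alphabet `Σ = {push v, pop v | v ∈ V}`:
`Sum.inl v` is `push v`, `Sum.inr v` is `pop v`. -/
abbrev Alph (V : Type) : Type := V ⊕ V

/-- The letter `push v`. -/
def pushSym {V : Type} (v : V) : Alph V := Sum.inl v

/-- The letter `pop v`. -/
def popSym {V : Type} (v : V) : Alph V := Sum.inr v

/-- `pushpop(L)`: the least language containing `L` closed under the rule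
"if `x · push v · pop v · y ∈ pushpop(L)` then `x · y ∈ pushpop(L)`". -/
inductive PushPop {V : Type} (L : Language (Alph V)) : List (Alph V) → Prop
  | base {x : List (Alph V)} : x ∈ L → PushPop L x
  | step {x y : List (Alph V)} {v : V} :
      PushPop L (x ++ pushSym v :: popSym v :: y) → PushPop L (x ++ y)

/-- `pushpop(L)` as a language. -/
def pushpopCl {V : Type} (L : Language (Alph V)) : Language (Alph V) := {x | PushPop L x}

/-- `L_{pop*push*}`: words in which no pop occurs after a push, i.e. a block of pops
followed by a block of pushes. -/
def PopsThenPushes {V : Type} : Language (Alph V) :=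
  {w | ∃ p q : List V, w = p.map popSym ++ q.map pushSym}

/-- `filter(L) := L ∩ L_{pop*push*}`. -/
def filterL {V : Type} (L : Language (Alph V)) : Language (Alph V) :=
  {w | w ∈ L ∧ w ∈ PopsThenPushes}

/-- `poppush(L)`: the least language containing `L` closed under the rule
"if `x · y ∈ poppush(L)` with `x` all pops and `y` all pushes, then
`x · pop v · push v · y ∈ poppush(L)` for every `v`". -/
inductive PopPush {V : Type} (L : Language (Alph V)) : List (Alph V) → Prop
  | base {x : List (Alph V)} : x ∈ L → PopPush L x
  | step {p q : List V} {v : V} :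
      PopPush L (p.map popSym ++ q.map pushSym) →
      PopPush L (p.map popSym ++ popSym v :: pushSym v :: q.map pushSym)

/-- `poppush(L)` as a language. -/
def poppushCl {V : Type} (L : Language (Alph V)) : Language (Alph V) := {x | PopPush L x}

/-- The zipped alphabet: pairs whose first component is a pop symbol or `done` (`none`)
and whose second component is a push symbol or `done` (`none`). -/
abbrev ZAlph (V : Type) : Type := Option V × Option V

/-- Zip together a list of pop values (innermost, i.e. last, pop first) with a list of
push values (first push first), padding with `done` (`none`). -/
def zipAux {V : Type} : List V → List V → List (ZAlph V)
  | [], [] => []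
  | v :: p, [] => (some v, none) :: zipAux p []
  | [], w :: q => (none, some w) :: zipAux [] q
  | v :: p, w :: q => (some v, some w) :: zipAux p q

/-- Read off the maximal prefix of pop letters, returning the popped values in order
together with the remaining suffix. -/
def takePops {V : Type} : List (Alph V) → List V × List (Alph V)
  | Sum.inr v :: r => ((takePops r).1.cons v, (takePops r).2)
  | w => ([], w)

/-- If the word consists only of push letters, return their values in order; else `none`. -/
def asPushes {V : Type} : List (Alph V) → Option (List V)
  | [] => some []
  | Sum.inl v :: r => (asPushes r).map (v :: ·)
  | Sum.inr _ :: _ => none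

/-- `zip`: the partial function on `Σ*` defined only on words of the form pops-then-pushes,
pairing the last pop with the first push, and so on outwards, padding with `done`. -/
def zipWord {V : Type} (w : List (Alph V)) : Option (List (ZAlph V)) :=
  (asPushes (takePops w).2).map fun q => zipAux (takePops w).1.reverse q

/-- `zip(L) := { zip(x) | x ∈ L, zip(x) defined }`. -/
def zipLang {V : Type} (L : Language (Alph V)) : Language (ZAlph V) :=
  {z | ∃ w ∈ L, zipWord w = some z}

/-- `A = { (pop v, push v) | v ∈ V }`, viewed as a language of single letters of the
zipped alphabet. -/
def Aletters (V : Type) : Language (ZAlph V) :=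
  {w | ∃ v : V, w = [((some v : Option V), (some v : Option V))]}

section Aux
variable {V : Type}

lemma takePops_nil : takePops ([] : List (Alph V)) = ([], []) := rfl
lemma takePops_push (v : V) (r : List (Alph V)) :
    takePops (Sum.inl v :: r) = ([], Sum.inl v :: r) := rfl
lemma takePops_pop (v : V) (r : List (Alph V)) :
    takePops (Sum.inr v :: r) = ((takePops r).1.cons v, (takePops r).2) := rfl

lemma takePops_pops_app (p : List V) (q : List V) :
    takePops (p.map popSym ++ q.map pushSym) = (p, q.map pushSym) := by
  induction p with
  | nil =>
    cases q with
    | nil => rfl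
    | cons w q => rfl
  | cons v p ih =>
    simp only [List.map_cons, List.cons_append, popSym, takePops_pop, ih]

lemma asPushes_pushes (q : List V) : asPushes (q.map pushSym) = some q := by
  induction q with
  | nil => rfl
  | cons w q ih => simp [pushSym, asPushes, ih]

lemma zipWord_pops_pushes (p q : List V) :
    zipWord (p.map popSym ++ q.map pushSym) = some (zipAux p.reverse q) := by
  simp [zipWord, takePops_pops_app, asPushes_pushes]

lemma zipAux_snoc (p : List V) (v : V) (q : List V) :
    zipAux (v :: p) (v :: q) = (some v, some v) :: zipAux p q := by simp [zipAux]

lemma takePops_eq (w : List (Alph V)) :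
    w = (takePops w).1.map popSym ++ (takePops w).2 := by
  induction w with
  | nil => rfl
  | cons a r ih =>
    cases a with
    | inl v => rfl
    | inr v =>
      rw [takePops_pop]
      simpa [popSym] using ih

lemma asPushes_eq : ∀ (w : List (Alph V)) (q : List V),
    asPushes w = some q → w = q.map pushSym := by
  intro w
  induction w with
  | nil => intro q h; simp [asPushes] at h; simp [← h]
  | cons a r ih =>
    intro q h
    cases a with
    | inl v =>
      simp only [asPushes, Option.map_eq_some_iff] at h
      obtain ⟨q', hq', rfl⟩ := h
      simp [pushSym, ih q' hq']
    | inr v => simp [asPushes] at h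

lemma zipWord_inv {w : List (Alph V)} {z : List (ZAlph V)} (h : zipWord w = some z) :
    ∃ p q : List V, w = p.map popSym ++ q.map pushSym ∧ z = zipAux p.reverse q := by
  simp only [zipWord, Option.map_eq_some_iff] at h
  obtain ⟨q, hq, hz⟩ := h
  exact ⟨(takePops w).1, q, by rw [← asPushes_eq _ _ hq]; exact takePops_eq w, hz.symm⟩

lemma mem_kstar_Aletters {a : List (ZAlph V)} (h : a ∈ KStar.kstar (Aletters V)) :
    ∃ vs : List V, a = vs.map (fun v => ((some v : Option V), (some v : Option V))) := by
  rw [Language.mem_kstar] at h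
  obtain ⟨Ls, rfl, hLs⟩ := h
  induction Ls with
  | nil => exact ⟨[], rfl⟩
  | cons x Ls ih =>
    obtain ⟨vs, hvs⟩ := ih (fun y hy => hLs y (List.mem_cons_of_mem _ hy))
    obtain ⟨v, hv⟩ := hLs x (List.mem_cons_self)
    exact ⟨v :: vs, by simp [hv, hvs]⟩

lemma Aletters_mem_kstar {vs : List V} :
    (vs.map (fun v => ((some v : Option V), (some v : Option V)))) ∈
      KStar.kstar (Aletters V) := by
  rw [Language.mem_kstar]
  refine ⟨vs.map (fun v => [((some v : Option V), (some v : Option V))]), by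
    induction vs with
    | nil => rfl
    | cons v vs ih => simp_all, ?_⟩
  intro y hy
  simp only [List.mem_map] at hy
  obtain ⟨v, _, rfl⟩ := hy
  exact ⟨v, rfl⟩

end Aux

/-- `zip(poppush(L)) = A* · zip(L)`, where `·` is language concatenation and `A*` is the
Kleene star of `A`. -/
theorem stmt6 {V : Type} [Fintype V] [Nonempty V] (L : Language (Alph V)) :
    zipLang (poppushCl L) = KStar.kstar (Aletters V) * zipLang L := by
  ext z
  constructor
  · rintro ⟨w, hw, hzip⟩
    induction hw generalizing z with
    | @base x hx =>
      refine Language.mem_mul.2 ⟨[], ?_, z, ⟨x, hx, hzip⟩, rfl⟩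
      exact (Aletters V).nil_mem_kstar
    | @step p q v _ ih =>
      rw [show (p.map popSym ++ popSym v :: pushSym v :: q.map pushSym)
            = (p ++ [v]).map popSym ++ (v :: q).map pushSym by simp,
          zipWord_pops_pushes] at hzip
      simp only [List.reverse_append, List.reverse_singleton, List.singleton_append,
        zipAux_snoc, Option.some_inj] at hzip
      obtain ⟨a, ha, b, hb, hab⟩ :=
        Language.mem_mul.1 (ih (zipAux p.reverse q) (zipWord_pops_pushes p q))
      refine Language.mem_mul.2 ⟨((some v, some v)) :: a, ?_, b, hb, by
        simp [← hab, ← hzip]⟩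
      obtain ⟨vs, rfl⟩ := mem_kstar_Aletters ha
      exact (show ((v :: vs).map fun u => ((some u : Option V), (some u : Option V)))
          ∈ KStar.kstar (Aletters V) from Aletters_mem_kstar)
  · rintro ⟨a, ha, b, hb, rfl⟩
    obtain ⟨vs, rfl⟩ := mem_kstar_Aletters ha
    obtain ⟨w, hwL, hzw⟩ := hb
    obtain ⟨p, q, rfl, rfl⟩ := zipWord_inv hzw
    clear hzw ha
    induction vs with
    | nil => exact ⟨_, PopPush.base hwL, by simpa using zipWord_pops_pushes p q⟩
    | cons v vs ih =>
      obtain ⟨w', hw', hz'⟩ := ih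
      obtain ⟨p', q', rfl, hz⟩ := zipWord_inv hz'
      refine ⟨p'.map popSym ++ popSym v :: pushSym v :: q'.map pushSym,
        PopPush.step hw', ?_⟩
      rw [show (p'.map popSym ++ popSym v :: pushSym v :: q'.map pushSym)
            = (p' ++ [v]).map popSym ++ (v :: q').map pushSym by simp,
          zipWord_pops_pushes]
      simp only [List.reverse_append, List.reverse_singleton, List.singleton_append,
        zipAux_snoc, Option.some_inj, ← hz]
      simp
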